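/- Let q be odd, σ : F_q → F_q a permutation, and x ∈ Γ_σ. Define ‖x‖ = Σ φ(k) where the sum is over all maximal collinear subsets of Γ_σ containing x of size k ≥ 3, and φ(k) = (k-1)(k-2)/(2k). If there are B slopes m ∈ F_q* with ℓ(x,m) ∩ Γ_σ = {x}, then ‖x‖ ≥ B/3. -/

import Mathlib

/-- Number of points of the graph of `σ` on the line through `x` of slope `m`. -/
def lineCount {F : Type*} [Field F] [Fintype F] [DecidableEq F]
    (σ : F → F) (x : F × F) (m : F) : ℕ :=
  (Finset.univ.filter (fun i : F => σ i - x.2 = m * (i - x.1))).card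

lemma lineCount_pos {F : Type*} [Field F] [Fintype F] [DecidableEq F]
    (σ : F → F) (j : F) (m : F) : 1 ≤ lineCount σ (j, σ j) m := by
  rw [lineCount, Finset.one_le_card]
  exact ⟨j, by simp⟩

lemma sum_lineCount {F : Type*} [Field F] [Fintype F] [DecidableEq F]
    (σ : F → F) (hσ : Function.Injective σ) (j : F) :
    ∑ m ∈ Finset.univ.filter (fun m : F => m ≠ 0), lineCount σ (j, σ j) m
      = 2 * (Finset.univ.filter (fun m : F => m ≠ 0)).card := by
  classical
  have hkey : ∀ i : F,
      ((Finset.univ.filter (fun m : F => m ≠ 0)).filter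
        (fun m => σ i - σ j = m * (i - j)))
      = if i = j then Finset.univ.filter (fun m : F => m ≠ 0)
        else {(σ i - σ j) / (i - j)} := by
    intro i
    split_ifs with h
    · subst h; simp
    · have hij : i - j ≠ 0 := sub_ne_zero.mpr h
      have hσij : σ i - σ j ≠ 0 := sub_ne_zero.mpr (fun he => h (hσ he))
      ext m
      simp only [Finset.mem_filter, Finset.mem_univ, true_and, Finset.mem_singleton]
      constructor
      · rintro ⟨_, he⟩
        rw [eq_div_iff hij]
        linear_combination -he
      · rintro rfl
        refine ⟨div_ne_zero hσij hij, ?_⟩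
        field_simp
  -- rewrite each lineCount as a sum of indicators and swap sums
  have : ∑ m ∈ Finset.univ.filter (fun m : F => m ≠ 0), lineCount σ (j, σ j) m
      = ∑ i : F, ((Finset.univ.filter (fun m : F => m ≠ 0)).filter
          (fun m => σ i - σ j = m * (i - j))).card := by
    simp only [lineCount, Finset.card_filter]
    rw [Finset.sum_comm]
  rw [this]
  have : ∀ i : F, ((Finset.univ.filter (fun m : F => m ≠ 0)).filter
      (fun m => σ i - σ j = m * (i - j))).card
      = if i = j then (Finset.univ.filter (fun m : F => m ≠ 0)).card else 1 := by
    intro i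
    rw [hkey i]
    split_ifs with h <;> simp
  simp only [this]
  rw [← Finset.add_sum_erase _ _ (Finset.mem_univ j)]
  rw [if_pos rfl]
  rw [Finset.sum_congr rfl (fun i hi => if_neg (Finset.mem_erase.mp hi).1),
    Finset.sum_const, smul_eq_mul, mul_one, Finset.card_erase_of_mem (Finset.mem_univ j)]
  have hfe : (Finset.univ.filter (fun m : F => m ≠ 0)) = Finset.univ.erase (0 : F) := by
    ext a; simp [Finset.mem_erase, and_comm]
  have hcard : (Finset.univ.filter (fun m : F => m ≠ 0)).card = Fintype.card F - 1 := by
    rw [hfe, Finset.card_erase_of_mem (Finset.mem_univ 0), Finset.card_univ]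
  have hpos : 1 ≤ Fintype.card F := Fintype.card_pos
  rw [Finset.card_univ]
  omega

theorem point_norm_ge {F : Type*} [Field F] [Fintype F] [DecidableEq F]
    (hq : Odd (Fintype.card F)) (σ : F → F) (hσ : Function.Bijective σ) (j : F)
    (B : ℕ)
    (hB : B = (Finset.univ.filter (fun m : F => m ≠ 0 ∧ lineCount σ (j, σ j) m = 1)).card) :
    (B : ℝ) / 3 ≤
      ∑ m ∈ Finset.univ.filter (fun m : F => m ≠ 0 ∧ 3 ≤ lineCount σ (j, σ j) m),
        ((lineCount σ (j, σ j) m : ℝ) - 1) * ((lineCount σ (j, σ j) m : ℝ) - 2) /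
          (2 * (lineCount σ (j, σ j) m : ℝ)) := by
  classical
  set c : F → ℕ := lineCount σ (j, σ j) with hc
  set s : Finset F := Finset.univ.filter (fun m : F => m ≠ 0) with hs
  set s1 : Finset F := s.filter (fun m => c m = 1) with hs1
  set s2 : Finset F := s.filter (fun m => c m = 2) with hs2
  set s3 : Finset F := s.filter (fun m => 3 ≤ c m) with hs3
  have hc1 : ∀ m, 1 ≤ c m := lineCount_pos σ j
  have hsum : ∑ m ∈ s, c m = 2 * s.card := sum_lineCount σ hσ.injective j
  have hBeq : B = s1.card := by
    rw [hB, hs1, hs, Finset.filter_filter]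
  have hgoal3 : Finset.univ.filter (fun m : F => m ≠ 0 ∧ 3 ≤ lineCount σ (j, σ j) m) = s3 := by
    rw [hs3, hs, Finset.filter_filter]
  rw [hgoal3]
  -- split s into s1, s2, s3
  have hdisj12 : Disjoint s1 s2 := by
    rw [Finset.disjoint_left]
    intro a ha hb
    simp only [hs1, hs2, Finset.mem_filter] at ha hb
    omega
  have hdisj3 : Disjoint (s1 ∪ s2) s3 := by
    rw [Finset.disjoint_left]
    intro a ha hb
    simp only [hs1, hs2, hs3, Finset.mem_union, Finset.mem_filter] at ha hb
    omega
  have hunion : s1 ∪ s2 ∪ s3 = s := by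
    ext m
    simp only [hs1, hs2, hs3, Finset.mem_union, Finset.mem_filter]
    have := hc1 m
    constructor
    · rintro ((⟨h, _⟩ | ⟨h, _⟩) | ⟨h, _⟩) <;> exact h
    · intro h
      by_cases h2 : c m = 1
      · exact Or.inl (Or.inl ⟨h, h2⟩)
      by_cases h4 : c m = 2
      · exact Or.inl (Or.inr ⟨h, h4⟩)
      · exact Or.inr ⟨h, by omega⟩
  have hsplit : ∀ f : F → ℝ, ∑ m ∈ s, f m = ∑ m ∈ s1, f m + ∑ m ∈ s2, f m + ∑ m ∈ s3, f m := by
    intro f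
    rw [← hunion, Finset.sum_union hdisj3, Finset.sum_union hdisj12]
  have hcardsplit : s.card = s1.card + s2.card + s3.card := by
    rw [← hunion, Finset.card_union_of_disjoint hdisj3, Finset.card_union_of_disjoint hdisj12]
  -- real-valued identity
  have hsumR : ∑ m ∈ s, (c m : ℝ) = 2 * s.card := by
    rw [← Nat.cast_sum, hsum]; push_cast; ring
  have h1R : ∑ m ∈ s1, (c m : ℝ) = s1.card := by
    have he : ∀ m ∈ s1, (c m : ℝ) = 1 := by
      intro m hm
      simp only [hs1, Finset.mem_filter] at hm
      rw [hm.2]; norm_num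
    rw [Finset.sum_congr rfl he, Finset.sum_const, nsmul_eq_mul, mul_one]
  have h2R : ∑ m ∈ s2, (c m : ℝ) = 2 * s2.card := by
    have he : ∀ m ∈ s2, (c m : ℝ) = 2 := by
      intro m hm
      simp only [hs2, Finset.mem_filter] at hm
      rw [hm.2]; norm_num
    rw [Finset.sum_congr rfl he, Finset.sum_const, nsmul_eq_mul, mul_comm]
  have hkeyid : ∑ m ∈ s3, ((c m : ℝ) - 2) = B := by
    have h := hsplit (fun m => (c m : ℝ))
    rw [hsumR, h1R, h2R] at h
    have hcR : (s.card : ℝ) = s1.card + s2.card + s3.card := by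
      rw [hcardsplit]; push_cast; ring
    rw [Finset.sum_sub_distrib, Finset.sum_const, nsmul_eq_mul, hBeq]
    linarith [h, hcR]
  -- termwise bound
  have hterm : ∀ m ∈ s3, ((c m : ℝ) - 2) / 3 ≤
      ((c m : ℝ) - 1) * ((c m : ℝ) - 2) / (2 * (c m : ℝ)) := by
    intro m hm
    simp only [hs3, Finset.mem_filter] at hm
    have hk : (3 : ℝ) ≤ (c m : ℝ) := by exact_mod_cast hm.2
    rw [div_le_div_iff₀ (by norm_num) (by nlinarith)]
    nlinarith
  calc (B : ℝ) / 3 = ∑ m ∈ s3, ((c m : ℝ) - 2) / 3 := by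
        rw [← Finset.sum_div, hkeyid]
    _ ≤ _ := Finset.sum_le_sum hterm
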